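/- arXiv:2206.09160 — 3 statements merged into one kernel-verified Lean document; each statement's English description precedes it below -/
import Mathlib

section
/- Let t₁ ≤ t₂ and μ ≥ 0 be real numbers. For every t₃ ∈ ℝ, the minimizer of w ↦ μ·|w| + (1/2)·(t₃ − w)² over w ∈ [t₁, t₂] equals the projection onto [t₁, t₂] of the soft-thresholded value t₃ − proj_{[−μ,μ]}(t₃), i.e. prox_{μ|·| + I_{[t₁,t₂]}}(t₃) = proj_{[t₁,t₂]}(t₃ − proj_{[−μ,μ]}(t₃)). -/
lemma subgrad_min (μ t₃ h p w : ℝ) (hh : |h| ≤ μ)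
    (hp : h * p = μ * |p|) (hvar : 0 ≤ (h + p - t₃) * (w - p)) :
    μ * |p| + (1 / 2) * (t₃ - p) ^ 2 ≤ μ * |w| + (1 / 2) * (t₃ - w) ^ 2 := by
  have h1 : h * w ≤ μ * |w| := by
    calc h * w ≤ |h * w| := le_abs_self _
    _ = |h| * |w| := abs_mul _ _
    _ ≤ μ * |w| := mul_le_mul_of_nonneg_right hh (abs_nonneg _)
  nlinarith [sq_nonneg (w - p)]

lemma prox_min (t₁ t₂ μ t₃ : ℝ) (ht : t₁ ≤ t₂) (hμ : 0 ≤ μ)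
    (w : ℝ) (hw1 : t₁ ≤ w) (hw2 : w ≤ t₂) :
    μ * |max t₁ (min t₂ (t₃ - max (-μ) (min μ t₃)))| +
      (1 / 2) * (t₃ - max t₁ (min t₂ (t₃ - max (-μ) (min μ t₃)))) ^ 2 ≤
    μ * |w| + (1 / 2) * (t₃ - w) ^ 2 := by
  set c := max (-μ) (min μ t₃) with hc
  set s := t₃ - c with hs
  have hc1 : -μ ≤ c := le_max_left _ _
  have hc2 : c ≤ μ := max_le (by linarith) (le_trans (min_le_left _ _) le_rfl)
  have hμμ : |(-μ)| ≤ μ := by rw [abs_of_nonpos (by linarith)]; linarith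
  have hμp : |μ| ≤ μ := by rw [abs_of_nonneg hμ]
  have hspos : 0 < s → c = μ := by
    intro h
    rcases min_cases μ t₃ with ⟨h1, h2⟩ | ⟨h1, h2⟩
    · rw [hc, h1]; exact max_eq_right (by linarith)
    · exfalso; have : t₃ ≤ c := by rw [hc, h1]; exact le_max_right _ _
      simp only [hs] at h; linarith
  have hsneg : s < 0 → c = -μ := by
    intro h
    rcases max_cases (-μ) (min μ t₃) with ⟨h1, h2⟩ | ⟨h1, h2⟩
    · exact h1
    · exfalso
      have : c ≤ t₃ := le_trans (le_of_eq h1) (min_le_right _ _)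
      simp only [hs] at h; linarith
  rcases le_total s t₁ with h1 | h1
  · have hp : max t₁ (min t₂ s) = t₁ := by
      rw [min_eq_right (le_trans h1 ht), max_eq_left h1]
    rw [hp]
    rcases le_or_gt 0 t₁ with h0 | h0
    · refine subgrad_min μ t₃ μ t₁ w hμp (by rw [abs_of_nonneg h0]) ?_
      simp only [hs] at h1; nlinarith
    · have hcneg : c = -μ := hsneg (by linarith)
      refine subgrad_min μ t₃ (-μ) t₁ w hμμ (by rw [abs_of_nonpos h0.le]; ring) ?_
      simp only [hs] at h1; nlinarith [hcneg]
  · rcases le_total t₂ s with h2 | h2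
    · have hp : max t₁ (min t₂ s) = t₂ := by
        rw [min_eq_left h2, max_eq_right ht]
      rw [hp]
      rcases le_or_gt t₂ 0 with h0 | h0
      · have hle : -μ ≤ t₃ - t₂ := by
          rcases lt_trichotomy s 0 with h | h | h
          · have := hsneg h; simp only [hs] at h2; linarith
          · simp only [hs] at h h2 ⊢; linarith
          · have := hspos h; simp only [hs] at h2 ⊢; linarith
        refine subgrad_min μ t₃ (-μ) t₂ w hμμ (by rw [abs_of_nonpos h0]; ring) ?_
        nlinarith
      · have hcμ : c = μ := hspos (by linarith)
        refine subgrad_min μ t₃ μ t₂ w hμp (by rw [abs_of_nonneg h0.le]) ?_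
        simp only [hs] at h2; nlinarith [hcμ]
    · have hp : max t₁ (min t₂ s) = s := by
        rw [min_eq_right h2, max_eq_right h1]
      rw [hp]
      have hcp : c * s = μ * |s| := by
        rcases lt_trichotomy s 0 with h | h | h
        · rw [hsneg h, abs_of_neg h]; ring
        · rw [h, abs_zero]; ring
        · rw [hspos h, abs_of_pos h]
      refine subgrad_min μ t₃ c s w (abs_le.mpr ⟨hc1, hc2⟩) hcp ?_
      simp only [hs]; nlinarith

theorem stmt_4 (t₁ t₂ μ : ℝ) (ht : t₁ ≤ t₂) (hμ : 0 ≤ μ) :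
    ∀ t₃ : ℝ,
      max t₁ (min t₂ (t₃ - max (-μ) (min μ t₃))) ∈ Set.Icc t₁ t₂ ∧
      (∀ w ∈ Set.Icc t₁ t₂,
        μ * |max t₁ (min t₂ (t₃ - max (-μ) (min μ t₃)))| +
          (1 / 2) * (t₃ - max t₁ (min t₂ (t₃ - max (-μ) (min μ t₃)))) ^ 2 ≤
        μ * |w| + (1 / 2) * (t₃ - w) ^ 2) ∧
      (∀ w ∈ Set.Icc t₁ t₂,
        (∀ w' ∈ Set.Icc t₁ t₂,
          μ * |w| + (1 / 2) * (t₃ - w) ^ 2 ≤ μ * |w'| + (1 / 2) * (t₃ - w') ^ 2) →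
        w = max t₁ (min t₂ (t₃ - max (-μ) (min μ t₃)))) := by
  intro t₃
  set p := max t₁ (min t₂ (t₃ - max (-μ) (min μ t₃))) with hpdef
  have hpmem : p ∈ Set.Icc t₁ t₂ := by
    constructor
    · exact le_max_left _ _
    · exact max_le ht (min_le_left _ _)
  refine ⟨hpmem, fun w hw => prox_min t₁ t₂ μ t₃ ht hμ w hw.1 hw.2, ?_⟩
  intro w hw hmin
  have hfw : μ * |w| + (1 / 2) * (t₃ - w) ^ 2 = μ * |p| + (1 / 2) * (t₃ - p) ^ 2 :=
    le_antisymm (hmin p hpmem) (prox_min t₁ t₂ μ t₃ ht hμ w hw.1 hw.2)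
  -- midpoint
  set m := (w + p) / 2 with hm
  have hmmem : m ∈ Set.Icc t₁ t₂ := by
    constructor
    · simp only [hm]; rcases hw with ⟨a, b⟩; rcases hpmem with ⟨c', d⟩; linarith
    · simp only [hm]; rcases hw with ⟨a, b⟩; rcases hpmem with ⟨c', d⟩; linarith
  have habs : |m| ≤ (|w| + |p|) / 2 := by
    simp only [hm]
    calc |(w + p) / 2| = |w + p| / 2 := by rw [abs_div]; norm_num
    _ ≤ (|w| + |p|) / 2 := by linarith [abs_add_le w p]
  have h2 := hmin m hmmem
  have hq : (t₃ - m) ^ 2 = ((t₃ - w) ^ 2 + (t₃ - p) ^ 2) / 2 - (w - p) ^ 2 / 4 := by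
    simp only [hm]; ring
  have : (w - p) ^ 2 ≤ 0 := by
    linarith [mul_le_mul_of_nonneg_left habs hμ]
  have : w - p = 0 := by nlinarith [sq_nonneg (w - p)]
  linarith
end

section
/- With the quasi-interpolation operator I of the previous context, for every u ∈ L¹(D) one has ‖I u‖_{L¹(D)} ≤ ‖u‖_{L¹(D)}. -/
open MeasureTheory

theorem stmt_14
    {X : Type*} [MeasurableSpace X] (μ : Measure X) [IsFiniteMeasure μ]
    (hμpos : 0 < μ Set.univ)
    (n : ℕ) (φ : Fin n → X → ℝ)
    (hφmeas : ∀ j, Measurable (φ j))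
    (hφbdd : ∀ j, ∃ C : ℝ, ∀ x, |φ j x| ≤ C)
    (hφnonneg : ∀ j, ∀ x, 0 ≤ φ j x)
    (hφint : ∀ j, 0 < ∫ x, φ j x ∂μ)
    (hφsum : ∀ᵐ x ∂μ, ∑ j, φ j x = 1)
    (u : X → ℝ) (hu : Integrable u μ)
    (Iu : X → ℝ)
    (hIu : ∀ x, Iu x =
      ∑ j, ((∫ y, u y * φ j y ∂μ) / (∫ y, φ j y ∂μ)) * φ j x) :
    (∫ x, |Iu x| ∂μ) ≤ ∫ x, |u x| ∂μ := by
  -- integrability of each φ j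
  have hφi : ∀ j, Integrable (φ j) μ := by
    intro j
    obtain ⟨C, hC⟩ := hφbdd j
    exact ⟨(hφmeas j).aestronglyMeasurable,
      HasFiniteIntegral.of_bounded (C := C) (ae_of_all _ fun x => by
        simpa [Real.norm_eq_abs] using hC x)⟩
  -- integrability of |u| * φ j
  have huφi : ∀ j, Integrable (fun y => |u y| * φ j y) μ := by
    intro j
    have := (hu.abs).bdd_mul (c := (hφbdd j).choose) (hφmeas j).aestronglyMeasurable
      (ae_of_all _ (fun x => by
        simpa [Real.norm_eq_abs] using (hφbdd j).choose_spec x))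
    exact this.congr (ae_of_all _ fun x => mul_comm _ _)
  have huφi' : ∀ j, Integrable (fun y => u y * φ j y) μ := by
    intro j
    have := hu.bdd_mul (c := (hφbdd j).choose) (hφmeas j).aestronglyMeasurable
      (ae_of_all _ (fun x => by
        simpa [Real.norm_eq_abs] using (hφbdd j).choose_spec x))
    exact this.congr (ae_of_all _ fun x => mul_comm _ _)
  set c : Fin n → ℝ := fun j => (∫ y, |u y| * φ j y ∂μ) / (∫ y, φ j y ∂μ) with hc
  -- the dominating function
  set g : X → ℝ := fun x => ∑ j, c j * φ j x with hg
  have hgi : Integrable g μ :=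
    integrable_finset_sum _ fun j _ => (hφi j).const_mul _
  have hkey : ∀ j, |∫ y, u y * φ j y ∂μ| ≤ ∫ y, |u y| * φ j y ∂μ := by
    intro j
    calc |∫ y, u y * φ j y ∂μ| ≤ ∫ y, |u y| * |φ j y| ∂μ := by
          simpa [Real.norm_eq_abs, abs_mul] using
            norm_integral_le_integral_norm (fun y => u y * φ j y) (μ := μ)
      _ = ∫ y, |u y| * φ j y ∂μ := by
          refine integral_congr_ae (ae_of_all _ fun y => ?_)
          show |u y| * |φ j y| = |u y| * φ j y
          rw [abs_of_nonneg (hφnonneg j y)]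
  have hpt : ∀ x, |Iu x| ≤ g x := by
    intro x
    rw [hIu x]
    refine (Finset.abs_sum_le_sum_abs _ _).trans ?_
    refine Finset.sum_le_sum fun j _ => ?_
    rw [abs_mul, abs_of_nonneg (hφnonneg j x), abs_div,
      abs_of_nonneg (hφint j).le]
    refine mul_le_mul_of_nonneg_right ?_ (hφnonneg j x)
    show _ ≤ (∫ y, |u y| * φ j y ∂μ) / (∫ y, φ j y ∂μ)
    gcongr
    · exact (hφint j).le
    · exact hkey j
  calc (∫ x, |Iu x| ∂μ) ≤ ∫ x, g x ∂μ :=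
        integral_mono_of_nonneg (ae_of_all _ fun x => abs_nonneg _) hgi
          (ae_of_all _ hpt)
    _ = ∑ j, c j * ∫ x, φ j x ∂μ := by
        rw [hg, integral_finset_sum _ fun j _ => (hφi j).const_mul _]
        simp [integral_const_mul]
    _ = ∑ j, ∫ x, |u x| * φ j x ∂μ := by
        refine Finset.sum_congr rfl fun j _ => ?_
        show (∫ y, |u y| * φ j y ∂μ) / (∫ y, φ j y ∂μ) * _ = _
        exact div_mul_cancel₀ _ (hφint j).ne'
    _ = ∫ x, ∑ j, |u x| * φ j x ∂μ :=
        (integral_finset_sum _ fun j _ => huφi j).symm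
    _ = ∫ x, |u x| ∂μ := by
        refine integral_congr_ae ?_
        filter_upwards [hφsum] with x hx
        rw [← Finset.mul_sum, hx, mul_one]
end

section
/- With the quasi-interpolation operator I as above, if 𝔩 ≤ 0 ≤ 𝔲 are real constants and u ∈ L¹(D) satisfies 𝔩 ≤ u ≤ 𝔲 a.e., then 𝔩 ≤ I u ≤ 𝔲 a.e. -/
open MeasureTheory

theorem stmt_15
    {X : Type*} [MeasurableSpace X] (μ : Measure X) [IsFiniteMeasure μ]
    (hμpos : 0 < μ Set.univ)
    (n : ℕ) (φ : Fin n → X → ℝ)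
    (hφmeas : ∀ j, Measurable (φ j))
    (hφbdd : ∀ j, ∃ C : ℝ, ∀ x, |φ j x| ≤ C)
    (hφnonneg : ∀ j, ∀ x, 0 ≤ φ j x)
    (hφint : ∀ j, 0 < ∫ x, φ j x ∂μ)
    (hφsum : ∀ᵐ x ∂μ, ∑ j, φ j x = 1)
    (𝔩 𝔲 : ℝ) (h𝔩 : 𝔩 ≤ 0) (h𝔲 : 0 ≤ 𝔲)
    (u : X → ℝ) (hu : Integrable u μ)
    (hbox : ∀ᵐ x ∂μ, 𝔩 ≤ u x ∧ u x ≤ 𝔲)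
    (Iu : X → ℝ)
    (hIu : ∀ x, Iu x =
      ∑ j, ((∫ y, u y * φ j y ∂μ) / (∫ y, φ j y ∂μ)) * φ j x) :
    ∀ᵐ x ∂μ, 𝔩 ≤ Iu x ∧ Iu x ≤ 𝔲 := by
  -- integrability facts
  have hφI : ∀ j, Integrable (φ j) μ := by
    intro j
    obtain ⟨C, hC⟩ := hφbdd j
    exact Integrable.mono' (integrable_const C) (hφmeas j).aestronglyMeasurable
      (Filter.Eventually.of_forall fun x => by simpa using hC x)
  have huφI : ∀ j, Integrable (fun y => u y * φ j y) μ := by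
    intro j
    obtain ⟨C, hC⟩ := hφbdd j
    have := hu.bdd_mul (c := C) (hφmeas j).aestronglyMeasurable (Filter.Eventually.of_forall fun x => by simpa using hC x)
    simpa [mul_comm] using this
  -- bounds on coefficients π j
  have hπ : ∀ j, 𝔩 ≤ (∫ y, u y * φ j y ∂μ) / (∫ y, φ j y ∂μ) ∧
      (∫ y, u y * φ j y ∂μ) / (∫ y, φ j y ∂μ) ≤ 𝔲 := by
    intro j
    have hpos := hφint j
    constructor
    · rw [le_div_iff₀ hpos]
      calc 𝔩 * ∫ y, φ j y ∂μ = ∫ y, 𝔩 * φ j y ∂μ := (integral_const_mul 𝔩 _).symm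
        _ ≤ ∫ y, u y * φ j y ∂μ := by
            refine integral_mono_ae ((hφI j).const_mul 𝔩) (huφI j) ?_
            filter_upwards [hbox] with x ⟨h1, _⟩
            exact mul_le_mul_of_nonneg_right h1 (hφnonneg j x)
    · rw [div_le_iff₀ hpos]
      calc (∫ y, u y * φ j y ∂μ) ≤ ∫ y, 𝔲 * φ j y ∂μ := by
            refine integral_mono_ae (huφI j) ((hφI j).const_mul 𝔲) ?_
            filter_upwards [hbox] with x ⟨_, h2⟩
            exact mul_le_mul_of_nonneg_right h2 (hφnonneg j x)
        _ = 𝔲 * ∫ y, φ j y ∂μ := integral_const_mul 𝔲 _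
  filter_upwards [hφsum] with x hx
  rw [hIu x]
  constructor
  · calc 𝔩 = ∑ j, 𝔩 * φ j x := by rw [← Finset.mul_sum, hx, mul_one]
      _ ≤ ∑ j, ((∫ y, u y * φ j y ∂μ) / (∫ y, φ j y ∂μ)) * φ j x :=
        Finset.sum_le_sum fun j _ =>
          mul_le_mul_of_nonneg_right (hπ j).1 (hφnonneg j x)
  · calc ∑ j, ((∫ y, u y * φ j y ∂μ) / (∫ y, φ j y ∂μ)) * φ j x
        ≤ ∑ j, 𝔲 * φ j x :=
        Finset.sum_le_sum fun j _ =>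
          mul_le_mul_of_nonneg_right (hπ j).2 (hφnonneg j x)
      _ = 𝔲 := by rw [← Finset.mul_sum, hx, mul_one]
end
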